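/- Let θ, η, α, γ be inner functions and a₁, a₂ ∈ 𝒢H̄∞ with θ = a₁·η·ā₁⁻¹ and α = a₂·γ·ā₂⁻¹. Then for every φ ∈ L∞, setting φ̃ = ā₂·φ·a₁, the operators D_{ā₂⁻¹}^{γ,α} and D_{a₁⁻¹}^{θ,η} are bounded and invertible and D_φ^{θ,α} = D_{ā₂⁻¹}^{γ,α} ∘ D_{φ̃}^{η,γ} ∘ D_{a₁⁻¹}^{θ,η}; in particular, D_φ^{θ,α} is equivalent to D_{φ̃}^{η,γ}. -/

import Mathlib

open MeasureTheory

noncomputable section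

/-! ## Setup: the circle, L², L∞, multiplication operators, Hardy space,
model spaces, and generalized Toeplitz operators -/

instance : Fact (0 < 2 * Real.pi) := ⟨by positivity⟩

/-- The normalized Lebesgue (Haar) measure `dθ/2π` on the circle. -/
abbrev μH : Measure (AddCircle (2 * Real.pi)) := AddCircle.haarAddCircle

/-- The Lebesgue space `L²` of the circle. -/
abbrev L2 : Type := Lp ℂ 2 μH

/-- The space `L∞` of essentially bounded functions on the circle. -/
abbrev Linf : Type := Lp ℂ ⊤ μH

/-- Pointwise (a.e.) multiplication on `L∞`. -/
instance : Mul Linf :=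
  ⟨fun f g => ((Lp.memLp g).smul (r := ⊤) (Lp.memLp f)).toLp (⇑f • ⇑g)⟩

/-- The constant function `1` as an element of `L∞`. -/
instance : One Linf := ⟨(memLp_const (1 : ℂ)).toLp (fun _ => (1 : ℂ))⟩

/-- Complex conjugation on `L∞`. -/
instance : Star Linf :=
  ⟨fun f => ((Complex.conjCLE.toContinuousLinearMap).comp_memLp' (Lp.memLp f)).toLp
    ((starRingEnd ℂ) ∘ ⇑f)⟩

/-- Multiplication of an `L²` function by an `L∞` function. -/
def mulFun (φ : Linf) (f : L2) : L2 :=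
  ((Lp.memLp f).smul (r := 2) (Lp.memLp φ)).toLp (⇑φ • ⇑f)

lemma mulFun_coe (φ : Linf) (f : L2) : mulFun φ f =ᵐ[μH] ⇑φ • ⇑f :=
  MemLp.coeFn_toLp _

lemma mulFun_norm_le (φ : Linf) (f : L2) : ‖mulFun φ f‖ ≤ ‖φ‖ * ‖f‖ := by
  rw [mulFun, Lp.norm_toLp, Lp.norm_def, Lp.norm_def, ← ENNReal.toReal_mul]
  refine ENNReal.toReal_mono ?_ ?_
  · exact ENNReal.mul_ne_top (Lp.eLpNorm_ne_top φ) (Lp.eLpNorm_ne_top f)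
  · exact eLpNorm_smul_le_eLpNorm_top_mul_eLpNorm 2 (Lp.aestronglyMeasurable f) ⇑φ

/-- The bounded multiplication operator `M_φ : L² → L²` for `φ ∈ L∞`. -/
def mulCLM (φ : Linf) : L2 →L[ℂ] L2 :=
  LinearMap.mkContinuous
    { toFun := mulFun φ
      map_add' := by
        intro f g
        apply Lp.ext
        filter_upwards [mulFun_coe φ (f + g), mulFun_coe φ f, mulFun_coe φ g,
          Lp.coeFn_add f g, Lp.coeFn_add (mulFun φ f) (mulFun φ g)] with x h1 h2 h3 h4 h5
        simp only [Pi.smul_apply', Pi.add_apply] at *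
        rw [h1, h5, h2, h3, h4]
        exact smul_add _ _ _
      map_smul' := by
        intro c f
        apply Lp.ext
        filter_upwards [mulFun_coe φ (c • f), mulFun_coe φ f,
          Lp.coeFn_smul c f, Lp.coeFn_smul c (mulFun φ f)] with x h1 h2 h3 h4
        simp only [Pi.smul_apply', Pi.smul_apply, RingHom.id_apply] at *
        rw [h1, h4, h2, h3]
        exact smul_comm _ _ _ }
    ‖φ‖ (mulFun_norm_le φ)

/-- The image `a·K = {a f : f ∈ K}` of a subspace `K ⊆ L²` under multiplication by `a ∈ L∞`. -/
def smulSub (a : Linf) (K : Submodule ℂ L2) : Submodule ℂ L2 :=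
  K.map (mulCLM a : L2 →ₗ[ℂ] L2)

/-- The Hardy space `H² = {f ∈ L² : f̂(n) = 0 for n < 0}`. -/
def Hardy : Submodule ℂ L2 where
  carrier := {f | ∀ n : ℤ, n < 0 → fourierBasis.repr f n = 0}
  add_mem' := by
    intro f g hf hg n hn
    rw [map_add, lp.coeFn_add, Pi.add_apply, hf n hn, hg n hn, add_zero]
  zero_mem' := by
    intro n hn
    rw [map_zero, lp.coeFn_zero]
    rfl
  smul_mem' := by
    intro c f hf n hn
    rw [_root_.map_smul, lp.coeFn_smul, Pi.smul_apply, hf n hn, smul_zero]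

lemma hardy_isClosed : IsClosed (Hardy : Set L2) := by
  have h : (Hardy : Set L2) =
      ⋂ n : {m : ℤ // m < 0}, {f : L2 | fourierBasis.repr f n.1 = 0} := by
    ext f
    constructor
    · intro hf
      exact Set.mem_iInter.2 fun n => hf n.1 n.2
    · intro hf n hn
      exact Set.mem_iInter.1 hf ⟨n, hn⟩
  rw [h]
  refine isClosed_iInter fun n => isClosed_eq ?_ continuous_const
  have : (fun f : L2 => fourierBasis.repr f n.1) =
      fun f : L2 => (innerSL ℂ (fourierBasis n.1)) f := by
    funext f
    exact fourierBasis.repr_apply_apply f n.1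
  rw [this]
  exact (innerSL ℂ (fourierBasis n.1)).continuous

instance : CompleteSpace Hardy := hardy_isClosed.completeSpace_coe

/-- The model space `K_θ = H² ⊖ θH² = H² ∩ (θH²)^⊥`. -/
def modelSpace (θ : Linf) : Submodule ℂ L2 :=
  Hardy ⊓ (smulSub θ Hardy)ᗮ

instance (θ : Linf) : CompleteSpace (modelSpace θ) := by
  suffices hc : IsClosed (modelSpace θ : Set L2) from IsClosed.completeSpace_coe (hs := hc)
  have h : (modelSpace θ : Set L2) = (Hardy : Set L2) ∩ ((smulSub θ Hardy)ᗮ : Set L2) := rfl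
  rw [h]
  exact hardy_isClosed.inter (smulSub θ Hardy).isClosed_orthogonal

/-- The generalized Toeplitz operator `T_φ^{H₁,H₂} = P_{H₂} M_φ |_{H₁}`. -/
def genToeplitz (φ : Linf) (H₁ H₂ : Submodule ℂ L2) [CompleteSpace H₂] : H₁ →L[ℂ] H₂ :=
  (H₂.orthogonalProjectionOnto).comp ((mulCLM φ).comp H₁.subtypeL)

/-- The orthogonal projection of `L²` onto `H`, viewed as an operator `L² → L²`. -/
def projL (H : Submodule ℂ L2) [CompleteSpace H] : L2 →L[ℂ] L2 :=
  H.subtypeL.comp (H.orthogonalProjectionOnto)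

/-- `φ ∈ H∞`: all negative Fourier coefficients of `φ` vanish. -/
def IsHardyInf (φ : Linf) : Prop := ∀ n : ℤ, n < 0 → fourierCoeff (⇑φ) n = 0

/-- `θ` is an inner function: `θ ∈ H∞` and `|θ| = 1` a.e. on the circle. -/
def IsInner (θ : Linf) : Prop :=
  IsHardyInf θ ∧ ∀ᵐ x ∂μH, ‖(θ : AddCircle (2 * Real.pi) → ℂ) x‖ = 1

/-- `a ∈ 𝒢H∞` with explicit inverse `b ∈ H∞`. -/
def GHinfPair (a b : Linf) : Prop := IsHardyInf a ∧ IsHardyInf b ∧ a * b = 1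

/-- `a ∈ 𝒢H∞`: `a` is invertible in the algebra `H∞`. -/
def IsGHinf (a : Linf) : Prop := ∃ b, GHinfPair a b

/-- `b ∈ 𝒢H̄∞`: `b` is the conjugate of an element of `𝒢H∞`. -/
def IsGHinfBar (b : Linf) : Prop := ∃ c, IsGHinf c ∧ b = star c

/-- `a ∈ 𝒢L∞` with explicit inverse `b`. -/
def GLinfPair (a b : Linf) : Prop := a * b = 1 ∧ b * a = 1

/-- `a ∈ 𝒢L∞`: `a` is invertible in the algebra `L∞`. -/
def IsGLinf (a : Linf) : Prop := ∃ b, GLinfPair a b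

/-- The kernel of an operator between subspaces of `L²`, viewed as a subspace of `L²`. -/
def subKer {K₁ K₂ : Submodule ℂ L2} (T : K₁ →L[ℂ] K₂) : Submodule ℂ L2 :=
  (LinearMap.ker (T : K₁ →ₗ[ℂ] K₂)).map K₁.subtype

/-- The range of an operator between subspaces of `L²`, viewed as a subspace of `L²`. -/
def subRan {K₁ K₂ : Submodule ℂ L2} (T : K₁ →L[ℂ] K₂) : Submodule ℂ L2 :=
  (LinearMap.range (T : K₁ →ₗ[ℂ] K₂)).map K₂.subtype

/-- The image of a subspace `S ⊆ K₁` under `T : K₁ → K₂`, viewed as a subspace of `L²`. -/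
def opImage {K₁ K₂ : Submodule ℂ L2} (T : K₁ →L[ℂ] K₂) (S : Submodule ℂ K₁) :
    Submodule ℂ L2 :=
  (S.map (T : K₁ →ₗ[ℂ] K₂)).map K₂.subtype

section Antilinear

variable {E : Type*} [NormedAddCommGroup E] [InnerProductSpace ℂ E]

/-- `C` is antilinear: `C(f + a g) = C f + ā C g`. -/
def IsAntilinearMap (C : E → E) : Prop :=
  ∀ (f g : E) (a : ℂ), C (f + a • g) = C f + (starRingEnd ℂ a) • C g

/-- `Cs` is the antilinear adjoint of `C`: `⟨C f, g⟩ = conj ⟨f, Cs g⟩`. -/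
def IsAntilinearAdjointOf (C Cs : E → E) : Prop :=
  ∀ f g : E, (inner ℂ (C f) g : ℂ) = (starRingEnd ℂ) (inner ℂ f (Cs g) : ℂ)

/-- `C` is an antilinear unitary: it is antilinear and its antilinear adjoint is its inverse. -/
def IsAntilinearUnitary (C : E → E) : Prop :=
  IsAntilinearMap C ∧ ∃ Cs : E → E, IsAntilinearAdjointOf C Cs ∧
    Function.LeftInverse Cs C ∧ Function.RightInverse Cs C

/-- `T` is complex selfadjoint with respect to `C` (with inverse `Cinv`): `C T C⁻¹ = T*`. -/
def IsComplexSelfadjointWith [CompleteSpace E] (T : E →L[ℂ] E) (C Cinv : E → E) : Prop :=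
  ∀ f : E, C (T (Cinv f)) = ContinuousLinearMap.adjoint T f

end Antilinear



/-! ## Auxiliary lemmas -/

section Aux

local notation "⟪" x ", " y "⟫" => @inner ℂ _ _ x y

lemma Linf_mul_coe (f g : Linf) : ⇑(f * g) =ᵐ[μH] fun x => f x * g x :=
  (MemLp.coeFn_toLp _).trans (Filter.Eventually.of_forall fun x => by
    simp [Pi.smul_apply', smul_eq_mul])

lemma Linf_star_coe (f : Linf) : ⇑(star f) =ᵐ[μH] fun x => (starRingEnd ℂ) (f x) :=
  (MemLp.coeFn_toLp _).trans (Filter.Eventually.of_forall fun x => rfl)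

lemma Linf_one_coe : ⇑(1 : Linf) =ᵐ[μH] fun _ => (1 : ℂ) :=
  MemLp.coeFn_toLp _

lemma mulCLM_coe (φ : Linf) (f : L2) : ⇑(mulCLM φ f) =ᵐ[μH] fun x => φ x * f x :=
  (mulFun_coe φ f).trans (Filter.Eventually.of_forall fun x => by
    simp [Pi.smul_apply', smul_eq_mul])

lemma mulCLM_mul (φ ψ : Linf) (f : L2) : mulCLM (φ * ψ) f = mulCLM φ (mulCLM ψ f) := by
  apply Lp.ext
  filter_upwards [mulCLM_coe (φ * ψ) f, mulCLM_coe φ (mulCLM ψ f), mulCLM_coe ψ f,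
    Linf_mul_coe φ ψ] with x h1 h2 h3 h4
  rw [h1, h2, h3, h4, mul_assoc]

lemma mulCLM_one (f : L2) : mulCLM (1 : Linf) f = f := by
  apply Lp.ext
  filter_upwards [mulCLM_coe (1 : Linf) f, Linf_one_coe] with x h1 h2
  rw [h1, h2, one_mul]

lemma mulCLM_cancel {u v : Linf} (h : u * v = 1) (f : L2) :
    mulCLM u (mulCLM v f) = f := by
  rw [← mulCLM_mul, h, mulCLM_one]

lemma Linf_star_star (f : Linf) : star (star f) = f := by
  apply Lp.ext
  filter_upwards [Linf_star_coe (star f), Linf_star_coe f] with x h1 h2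
  rw [h1, h2, Complex.conj_conj]

lemma Linf_star_mul_star (u v : Linf) : star u * star v = star (v * u) := by
  apply Lp.ext
  filter_upwards [Linf_mul_coe (star u) (star v), Linf_star_coe u, Linf_star_coe v,
    Linf_star_coe (v * u), Linf_mul_coe v u] with x h1 h2 h3 h4 h5
  rw [h1, h2, h3, h4, h5, map_mul]
  ring

lemma Linf_star_one : star (1 : Linf) = 1 := by
  apply Lp.ext
  filter_upwards [Linf_star_coe (1 : Linf), Linf_one_coe] with x h1 h2
  rw [h1, h2, map_one]

lemma fourierCoeff_congr {f g : AddCircle (2 * Real.pi) → ℂ} (h : f =ᵐ[μH] g) (n : ℤ) :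
    fourierCoeff f n = fourierCoeff g n := by
  unfold fourierCoeff
  refine integral_congr_ae ?_
  filter_upwards [h] with x hx
  rw [hx]

lemma inner_mulCLM_left (φ : Linf) (u v : L2) :
    ⟪u, mulCLM φ v⟫ = ⟪mulCLM (star φ) u, v⟫ := by
  rw [MeasureTheory.L2.inner_def, MeasureTheory.L2.inner_def]
  refine integral_congr_ae ?_
  filter_upwards [mulCLM_coe φ v, mulCLM_coe (star φ) u, Linf_star_coe φ] with x h1 h2 h3
  simp only [RCLike.inner_apply, h1, h2, h3, map_mul, Complex.conj_conj]
  ring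

lemma mulCLM_mem_hardy {d : Linf} (hd : IsHardyInf d) {f : L2} (hf : f ∈ Hardy) :
    mulCLM d f ∈ Hardy := by
  intro n hn
  rw [fourierBasis.repr_apply_apply, inner_mulCLM_left]
  set g := mulCLM (star d) (fourierBasis n) with hg
  have key : ∀ m : ℤ, ⟪g, fourierBasis m⟫ * ⟪fourierBasis m, f⟫ = 0 := by
    intro m
    rcases lt_or_ge m 0 with hm | hm
    · have h0 : fourierBasis.repr f m = 0 := hf m hm
      rw [fourierBasis.repr_apply_apply] at h0
      rw [h0, mul_zero]
    · have hgm : fourierBasis.repr g m = 0 := by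
        rw [fourierBasis_repr]
        have hbn : ⇑(fourierBasis (T := 2 * Real.pi) n) =ᵐ[μH] ⇑(fourier n) := by
          have : (fourierBasis (T := 2 * Real.pi) n : L2) = fourierLp 2 n := by
            rw [coe_fourierBasis]
          rw [this]
          exact coeFn_fourierLp 2 n
        have hcoe : ⇑g =ᵐ[μH] fun x => (starRingEnd ℂ) (d x) * fourier n x := by
          filter_upwards [mulCLM_coe (star d) (fourierBasis n), Linf_star_coe d, hbn]
            with x e1 e2 e3
          rw [e1, e2, e3]
        rw [fourierCoeff_congr hcoe m]
        have hconv : fourierCoeff (fun x => (starRingEnd ℂ) (d x) * fourier n x) m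
            = (starRingEnd ℂ) (fourierCoeff (⇑d) (n - m)) := by
          unfold fourierCoeff
          rw [← integral_conj]
          refine integral_congr_ae (Filter.Eventually.of_forall fun x => ?_)
          have h1 : (starRingEnd ℂ) ((fourier (T := 2 * Real.pi) (-(n - m))) x)
              = fourier (n - m) x := by
            rw [fourier_neg, Complex.conj_conj]
          have h2 : (fourier (T := 2 * Real.pi) (-m)) x * fourier n x
              = fourier (n - m) x := by
            rw [← fourier_add]
            congr 1
            ring
          simp only [smul_eq_mul, map_mul, h1]
          rw [← h2]
          ring
        rw [hconv, hd (n - m) (by omega), map_zero]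
      rw [fourierBasis.repr_apply_apply] at hgm
      rw [← inner_conj_symm, hgm, map_zero, zero_mul]
  have hsum := fourierBasis.hasSum_inner_mul_inner g f
  simp only [key] at hsum
  exact hsum.unique hasSum_zero

/-- The Crofoot-type transform: if `α = c̄ γ d` with `c, d ∈ H∞`, `c d = 1`, then
multiplication by `d` maps `K_γ` into `K_α`. -/
lemma crofoot {γ α c d : Linf} (hc : IsHardyInf c) (hd : IsHardyInf d)
    (hcd : c * d = 1) (hrel : α = star c * γ * d) {f : L2} (hf : f ∈ modelSpace γ) :
    mulCLM d f ∈ modelSpace α := by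
  obtain ⟨hf1, hf2⟩ := Submodule.mem_inf.mp hf
  refine Submodule.mem_inf.mpr ⟨mulCLM_mem_hardy hd hf1, ?_⟩
  rw [Submodule.mem_orthogonal]
  intro u hu
  obtain ⟨h, hh, rfl⟩ := Submodule.mem_map.mp hu
  show ⟪mulCLM α h, mulCLM d f⟫ = 0
  rw [hrel, mulCLM_mul, mulCLM_mul, inner_mulCLM_left]
  have hds : star d * star c = 1 := by
    rw [Linf_star_mul_star, hcd, Linf_star_one]
  rw [mulCLM_cancel hds]
  have hmem : mulCLM γ (mulCLM d h) ∈ smulSub γ Hardy :=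
    Submodule.mem_map_of_mem (mulCLM_mem_hardy hd hh)
  exact (Submodule.mem_orthogonal _ _).mp hf2 _ hmem

lemma mulCLM_mem_perp {γ α u : Linf}
    (h : ∀ g ∈ modelSpace γ, mulCLM (star u) g ∈ modelSpace α)
    {f : L2} (hf : f ∈ (modelSpace α)ᗮ) : mulCLM u f ∈ (modelSpace γ)ᗮ := by
  rw [Submodule.mem_orthogonal]
  intro g hg
  rw [inner_mulCLM_left]
  exact (Submodule.mem_orthogonal _ _).mp hf _ (h g hg)

lemma rel_symm {a b θ η : Linf} (hab : a * b = 1) (hba : b * a = 1)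
    (h : θ = a * η * star b) : η = b * θ * star a := by
  rw [h]
  refine Eq.symm (Lp.ext ?_)
  have hba' := Linf_mul_coe b a
  rw [hba] at hba'
  have hab' := Linf_mul_coe a b
  rw [hab] at hab'
  filter_upwards [Linf_mul_coe (b * (a * η * star b)) (star a),
    Linf_mul_coe b (a * η * star b), Linf_mul_coe (a * η) (star b), Linf_mul_coe a η,
    Linf_star_coe a, Linf_star_coe b, hba', hab', Linf_one_coe]
    with x e1 e2 e3 e4 e5 e6 e7 e8 e9
  rw [e1, e2, e3, e4, e5, e6]
  have hba'' : b x * a x = 1 := by rw [← e7, e9]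
  have hab'' : a x * b x = 1 := by rw [← e8, e9]
  calc b x * (a x * η x * (starRingEnd ℂ) (b x)) * (starRingEnd ℂ) (a x)
      = (b x * a x) * η x * (starRingEnd ℂ) (a x * b x) := by rw [map_mul]; ring
    _ = η x := by rw [hba'', hab'', map_one, one_mul, mul_one]

lemma ghinfbar_data {a b : Linf} (hbar : IsGHinfBar a) (hab : GLinfPair a b) :
    IsHardyInf (star a) ∧ IsHardyInf (star b) ∧ star a * star b = 1 ∧ star b * star a = 1 := by
  obtain ⟨c, ⟨d0, hc, hd0, hcd⟩, ha⟩ := hbar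
  have hsa : star a = c := by rw [ha, Linf_star_star]
  have hb : b = star d0 := by
    apply Lp.ext
    have h1 := Linf_mul_coe b a
    rw [hab.2] at h1
    have h2 := Linf_mul_coe c d0
    rw [hcd] at h2
    have ha' : ⇑a =ᵐ[μH] fun x => (starRingEnd ℂ) (c x) := by
      rw [ha]; exact Linf_star_coe c
    filter_upwards [h1, h2, Linf_one_coe, Linf_star_coe d0, ha'] with x e1 e2 e3 e4 e5
    rw [e4]
    have hba : b x * a x = 1 := by rw [← e1, e3]
    have hcd' : c x * d0 x = 1 := by rw [← e2, e3]
    have h5 : a x * (starRingEnd ℂ) (d0 x) = 1 := by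
      rw [e5, ← map_mul, hcd', map_one]
    calc b x = b x * (a x * (starRingEnd ℂ) (d0 x)) := by rw [h5, mul_one]
      _ = (b x * a x) * (starRingEnd ℂ) (d0 x) := by ring
      _ = (starRingEnd ℂ) (d0 x) := by rw [hba, one_mul]
  refine ⟨by rw [hsa]; exact hc, by rw [hb, Linf_star_star]; exact hd0, ?_, ?_⟩
  · rw [Linf_star_mul_star, hab.2, Linf_star_one]
  · rw [Linf_star_mul_star, hab.1, Linf_star_one]

lemma proj_perp_eq_zero {K : Submodule ℂ L2} [CompleteSpace K] {x : L2} (hx : x ∈ K) :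
    Submodule.orthogonalProjectionOnto Kᗮ x = 0 :=
  Submodule.orthogonalProjectionOnto_apply_of_mem_orthogonal
    (K.le_orthogonal_orthogonal hx)

lemma dual_cancel {γ' α' : Linf} (u v : Linf) (huv : u * v = 1)
    (hmap : ∀ g ∈ modelSpace γ', mulCLM u g ∈ modelSpace α')
    (f : (modelSpace α')ᗮ) :
    genToeplitz u (modelSpace γ')ᗮ (modelSpace α')ᗮ
      (genToeplitz v (modelSpace α')ᗮ (modelSpace γ')ᗮ f) = f := by
  set y := mulCLM v ↑f with hy
  have hdec : (↑(Submodule.orthogonalProjectionOnto (modelSpace γ')ᗮ y) : L2)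
      = y - ↑(Submodule.orthogonalProjectionOnto (modelSpace γ') y) :=
    eq_sub_of_add_eq' (Submodule.starProjection_add_starProjection_orthogonal y)
  show Submodule.orthogonalProjectionOnto (modelSpace α')ᗮ
      (mulCLM u ↑(Submodule.orthogonalProjectionOnto (modelSpace γ')ᗮ y)) = f
  rw [hdec, map_sub, map_sub, mulCLM_cancel huv,
    proj_perp_eq_zero (hmap _ (Submodule.coe_mem _)), sub_zero]
  exact Submodule.orthogonalProjectionOnto_mem_subspace_eq_self f

lemma dual_cancel' {γ' α' : Linf} (u v : Linf) (huv : u * v = 1)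
    (hmapv : ∀ g ∈ (modelSpace α')ᗮ, mulCLM v g ∈ (modelSpace γ')ᗮ)
    (f : (modelSpace α')ᗮ) :
    genToeplitz u (modelSpace γ')ᗮ (modelSpace α')ᗮ
      (genToeplitz v (modelSpace α')ᗮ (modelSpace γ')ᗮ f) = f := by
  have h1 : (↑(genToeplitz v (modelSpace α')ᗮ (modelSpace γ')ᗮ f) : L2) = mulCLM v ↑f :=
    Submodule.starProjection_eq_self_iff.mpr (hmapv _ f.2)
  show Submodule.orthogonalProjectionOnto (modelSpace α')ᗮ
      (mulCLM u ↑(genToeplitz v (modelSpace α')ᗮ (modelSpace γ')ᗮ f)) = f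
  rw [h1, mulCLM_cancel huv]
  exact Submodule.orthogonalProjectionOnto_mem_subspace_eq_self f


lemma genToeplitz_apply (φ : Linf) (H₁ H₂ : Submodule ℂ L2) [CompleteSpace H₂] (f : H₁) :
    genToeplitz φ H₁ H₂ f = Submodule.orthogonalProjectionOnto H₂ (mulCLM φ (f : L2)) := rfl

end Aux

/-- Theorem 7.1: if `θ = a₁ η ā₁⁻¹` and `α = a₂ γ ā₂⁻¹` with
`a₁, a₂ ∈ 𝒢H̄∞` (inverses `b₁, b₂`), then for any `φ ∈ L∞`, with `φ̃ = ā₂ φ a₁`,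
the operators `D_{ā₂⁻¹}^{γ,α}` and `D_{a₁⁻¹}^{θ,η}` are bounded invertible and
`D_φ^{θ,α} = D_{ā₂⁻¹}^{γ,α} D_{φ̃}^{η,γ} D_{a₁⁻¹}^{θ,η}`; in particular `D_φ^{θ,α}`
is equivalent to `D_{φ̃}^{η,γ}`. -/
theorem statement19 (θ η α γ : Linf)
    (hθ : IsInner θ) (hη : IsInner η) (hα : IsInner α) (hγ : IsInner γ)
    (a₁ b₁ a₂ b₂ : Linf)
    (hbar₁ : IsGHinfBar a₁) (hbar₂ : IsGHinfBar a₂)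
    (h₁ : GLinfPair a₁ b₁) (h₂ : GLinfPair a₂ b₂)
    (hθη : θ = a₁ * η * star b₁) (hαγ : α = a₂ * γ * star b₂) (φ : Linf) :
    genToeplitz φ (modelSpace θ)ᗮ (modelSpace α)ᗮ =
      (genToeplitz (star b₂) (modelSpace γ)ᗮ (modelSpace α)ᗮ).comp
        ((genToeplitz (star a₂ * φ * a₁) (modelSpace η)ᗮ (modelSpace γ)ᗮ).comp
          (genToeplitz b₁ (modelSpace θ)ᗮ (modelSpace η)ᗮ)) ∧
    (∃ E' : (modelSpace α)ᗮ →L[ℂ] (modelSpace γ)ᗮ,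
      (genToeplitz (star b₂) (modelSpace γ)ᗮ (modelSpace α)ᗮ).comp E' =
        ContinuousLinearMap.id ℂ (modelSpace α)ᗮ ∧
      E'.comp (genToeplitz (star b₂) (modelSpace γ)ᗮ (modelSpace α)ᗮ) =
        ContinuousLinearMap.id ℂ (modelSpace γ)ᗮ) ∧
    (∃ F' : (modelSpace η)ᗮ →L[ℂ] (modelSpace θ)ᗮ,
      (genToeplitz b₁ (modelSpace θ)ᗮ (modelSpace η)ᗮ).comp F' =
        ContinuousLinearMap.id ℂ (modelSpace η)ᗮ ∧
      F'.comp (genToeplitz b₁ (modelSpace θ)ᗮ (modelSpace η)ᗮ) =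
        ContinuousLinearMap.id ℂ (modelSpace θ)ᗮ) := by
  obtain ⟨hH1a, hH1b, hp1ab, hp1ba⟩ := ghinfbar_data hbar₁ h₁
  obtain ⟨hH2a, hH2b, hp2ab, hp2ba⟩ := ghinfbar_data hbar₂ h₂
  have rel1 : θ = star (star a₁) * η * star b₁ := by rw [Linf_star_star]; exact hθη
  have rel1' : η = star (star b₁) * θ * star a₁ := by
    rw [Linf_star_star]; exact rel_symm h₁.1 h₁.2 hθη
  have rel2 : α = star (star a₂) * γ * star b₂ := by rw [Linf_star_star]; exact hαγ
  have rel2' : γ = star (star b₂) * α * star a₂ := by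
    rw [Linf_star_star]; exact rel_symm h₂.1 h₂.2 hαγ
  have cro1 : ∀ g ∈ modelSpace η, mulCLM (star b₁) g ∈ modelSpace θ :=
    fun g hg => crofoot hH1a hH1b hp1ab rel1 hg
  have cro1' : ∀ g ∈ modelSpace θ, mulCLM (star a₁) g ∈ modelSpace η :=
    fun g hg => crofoot hH1b hH1a hp1ba rel1' hg
  have cro2 : ∀ g ∈ modelSpace γ, mulCLM (star b₂) g ∈ modelSpace α :=
    fun g hg => crofoot hH2a hH2b hp2ab rel2 hg
  have cro2' : ∀ g ∈ modelSpace α, mulCLM (star a₂) g ∈ modelSpace γ :=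
    fun g hg => crofoot hH2b hH2a hp2ba rel2' hg
  have perp_b₁ : ∀ g ∈ (modelSpace θ)ᗮ, mulCLM b₁ g ∈ (modelSpace η)ᗮ :=
    fun g hg => mulCLM_mem_perp cro1 hg
  have perp_a₁ : ∀ g ∈ (modelSpace η)ᗮ, mulCLM a₁ g ∈ (modelSpace θ)ᗮ :=
    fun g hg => mulCLM_mem_perp cro1' hg
  refine ⟨?_, ⟨genToeplitz (star a₂) (modelSpace α)ᗮ (modelSpace γ)ᗮ, ?_, ?_⟩,
    ⟨genToeplitz a₁ (modelSpace η)ᗮ (modelSpace θ)ᗮ, ?_, ?_⟩⟩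
  · apply ContinuousLinearMap.ext
    intro f
    rw [ContinuousLinearMap.comp_apply, ContinuousLinearMap.comp_apply]
    simp only [genToeplitz_apply]
    have hA : (↑(Submodule.orthogonalProjectionOnto (modelSpace η)ᗮ (mulCLM b₁ (f : L2))) : L2)
        = mulCLM b₁ (f : L2) :=
      Submodule.starProjection_eq_self_iff.mpr (perp_b₁ _ f.2)
    rw [hA]
    have hdec : (↑(Submodule.orthogonalProjectionOnto (modelSpace γ)ᗮ
          (mulCLM (star a₂ * φ * a₁) (mulCLM b₁ (f : L2)))) : L2)
        = mulCLM (star a₂ * φ * a₁) (mulCLM b₁ (f : L2))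
          - ↑(Submodule.orthogonalProjectionOnto (modelSpace γ)
              (mulCLM (star a₂ * φ * a₁) (mulCLM b₁ (f : L2)))) :=
      eq_sub_of_add_eq' (Submodule.starProjection_add_starProjection_orthogonal _)
    rw [hdec, map_sub, map_sub]
    have hkill : Submodule.orthogonalProjectionOnto (modelSpace α)ᗮ (mulCLM (star b₂)
        ↑(Submodule.orthogonalProjectionOnto (modelSpace γ)
          (mulCLM (star a₂ * φ * a₁) (mulCLM b₁ (f : L2))))) = 0 :=
      proj_perp_eq_zero (cro2 _ (Submodule.coe_mem _))
    rw [hkill, sub_zero, mulCLM_mul, mulCLM_mul, mulCLM_cancel h₁.1, mulCLM_cancel hp2ba]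
  · apply ContinuousLinearMap.ext
    intro f
    rw [ContinuousLinearMap.comp_apply, ContinuousLinearMap.id_apply]
    exact dual_cancel (star b₂) (star a₂) hp2ba cro2 f
  · apply ContinuousLinearMap.ext
    intro f
    rw [ContinuousLinearMap.comp_apply, ContinuousLinearMap.id_apply]
    exact dual_cancel (star a₂) (star b₂) hp2ab cro2' f
  · apply ContinuousLinearMap.ext
    intro f
    rw [ContinuousLinearMap.comp_apply, ContinuousLinearMap.id_apply]
    exact dual_cancel' b₁ a₁ h₁.2 perp_a₁ f
  · apply ContinuousLinearMap.ext
    intro f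
    rw [ContinuousLinearMap.comp_apply, ContinuousLinearMap.id_apply]
    exact dual_cancel' a₁ b₁ h₁.1 perp_b₁ f
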